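/- arXiv:0705.0302 — 4 statements merged into one kernel-verified Lean document; each statement's English description precedes it below -/
import Mathlib

section
/- Suppose the form on Λ satisfies the Hodge index property. Let M, N ∈ Λ be linearly independent over ℚ with 0 < N² ≤ M² and M.N > 0. Then N² < M.N. Moreover, if in addition L := M + N satisfies L² ≥ 4·(M.N) − 2, then 2·(M.N + N²) ≤ L². -/
/-- Step in the proof of Lemma 3.2: if the form satisfies the Hodge index
property, `M, N` are linearly independent (over ℚ, equivalently over ℤ in a
free module), `0 < N² ≤ M²` and `M.N > 0`, then `N² < M.N`; and if moreover
`L := M + N` satisfies `L² ≥ 4(M.N) − 2`, then `2(M.N + N²) ≤ L²`. -/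
theorem stmt_3 (Λ : Type*) [AddCommGroup Λ] [Module ℤ Λ] [Module.Free ℤ Λ]
    (b : Λ →ₗ[ℤ] Λ →ₗ[ℤ] ℤ) (hsymm : ∀ x y : Λ, b x y = b y x)
    (hodge : ∀ x y : Λ, 0 < b x x →
      b x x * b y y ≤ (b x y) ^ 2 ∧
        (b x x * b y y = (b x y) ^ 2 → ¬ LinearIndependent ℤ ![x, y]))
    (M N : Λ) (hind : LinearIndependent ℤ ![M, N])
    (hN : 0 < b N N) (hNM : b N N ≤ b M M) (hMN : 0 < b M N) :
    b N N < b M N ∧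
      (4 * b M N - 2 ≤ b (M + N) (M + N) →
        2 * (b M N + b N N) ≤ b (M + N) (M + N)) := by
  have hM : 0 < b M M := lt_of_lt_of_le hN hNM
  obtain ⟨hle, heq⟩ := hodge M N hM
  have hstrict : b M M * b N N < (b M N) ^ 2 := by
    rcases lt_or_eq_of_le hle with h | h
    · exact h
    · exact absurd hind (heq h)
  have hexp : b (M + N) (M + N) = b M M + 2 * b M N + b N N := by
    simp [map_add, hsymm N M]; ring
  constructor
  · nlinarith
  · intro _
    rw [hexp]
    nlinarith
end

section
/- Let N, L ∈ V be linearly independent with L² > 0, and set d := N.(L−N). Suppose Γ = aN + bL (a, b ∈ ℚ) satisfies Γ² = −2, Γ.L = 0 and Γ.N ∈ {0, 1}. Then Γ.N = 1, a = −2 and b = 2(d+N²)/L², i.e. Γ = −2N + (2(d+N²)/L²)·L; consequently L − 2N − Γ = (1 − 2(d+N²)/L²)·L. -/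
/-- Lemma 3.2(i) of the paper (together with the identity used in its part
(iv)): in `V = Pic(S_t) ⊗ ℚ`, if `N, L` are linearly independent, `L² > 0`,
`d := N.(L−N)`, and `Γ = aN + bL` satisfies `Γ² = −2`, `Γ.L = 0` and
`Γ.N ∈ {0, 1}`, then `Γ.N = 1`, `a = −2`, `b = 2(d+N²)/L²`, so that
`Γ = −2N + (2(d+N²)/L²)·L` and `L − 2N − Γ = (1 − 2(d+N²)/L²)·L`. -/
theorem stmt_4 (V : Type*) [AddCommGroup V] [Module ℚ V]
    (bf : V →ₗ[ℚ] V →ₗ[ℚ] ℚ) (hsymm : ∀ x y : V, bf x y = bf y x)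
    (N L : V) (hind : LinearIndependent ℚ ![N, L]) (hL : 0 < bf L L)
    (d : ℚ) (hd : d = bf N (L - N))
    (Γ : V) (a c : ℚ) (hΓ : Γ = a • N + c • L)
    (hΓΓ : bf Γ Γ = -2) (hΓL : bf Γ L = 0)
    (hΓN : bf Γ N = 0 ∨ bf Γ N = 1) :
    bf Γ N = 1 ∧ a = -2 ∧ c = 2 * (d + bf N N) / bf L L ∧
      Γ = (-2 : ℚ) • N + (2 * (d + bf N N) / bf L L) • L ∧
      L - (2 : ℚ) • N - Γ = (1 - 2 * (d + bf N N) / bf L L) • L := by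
  have hGG : a * bf Γ N + c * bf Γ L = -2 := by
    rw [← hΓΓ]
    nth_rewrite 3 [hΓ]
    simp [map_add, map_smul, smul_eq_mul, hsymm N Γ, hsymm L Γ]
  rw [hΓL, mul_zero, add_zero] at hGG
  have hGN1 : bf Γ N = 1 := by
    rcases hΓN with h | h
    · rw [h, mul_zero] at hGG; norm_num at hGG
    · exact h
  rw [hGN1, mul_one] at hGG
  have hGL : a * bf N L + c * bf L L = 0 := by
    rw [← hΓL, hΓ]; simp [map_add, map_smul, smul_eq_mul, hsymm N Γ, hsymm L Γ]
  have hdN : d + bf N N = bf N L := by rw [hd]; simp [map_sub]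
  have hc : c = 2 * (d + bf N N) / bf L L := by
    rw [hdN]
    field_simp
    rw [hGG] at hGL
    linarith
  refine ⟨hGN1, hGG, hc, ?_, ?_⟩
  · rw [hΓ, hGG, hc]
  · rw [hΓ, hGG, hc]
    have hne := hL.ne'
    rw [sub_smul, one_smul]
    module
end

section
/- Let N, L ∈ V be linearly independent with L² > 0, set d := N.(L−N), c := 2(d+N²)/L² and Γ := −2N + c·L, and assume Γ.N = 1. If A = xN + yL (x, y ∈ ℚ) satisfies Γ.A = 1 and A.(L−A) = d, then x = 1 and either y = 0 or y = 1 − c. (Thus, up to these two solutions, the decomposition L − Γ ∼ N + (L − N − Γ) is the unique decomposition of L − Γ with the prescribed intersection numbers.) -/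
/-- The computation proving Lemma 3.2(iii): with `N, L` linearly independent,
`L² > 0`, `d := N.(L−N)`, `c := 2(d+N²)/L²`, `Γ := −2N + cL` and `Γ.N = 1`,
if `A = xN + yL` satisfies `Γ.A = 1` and `A.(L−A) = d`, then `x = 1` and
either `y = 0` or `y = 1 − c`. -/
theorem stmt_5 (V : Type*) [AddCommGroup V] [Module ℚ V]
    (bf : V →ₗ[ℚ] V →ₗ[ℚ] ℚ) (hsymm : ∀ x y : V, bf x y = bf y x)
    (N L : V) (hind : LinearIndependent ℚ ![N, L]) (hL : 0 < bf L L)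
    (d c : ℚ) (hd : d = bf N (L - N)) (hc : c = 2 * (d + bf N N) / bf L L)
    (Γ : V) (hΓ : Γ = (-2 : ℚ) • N + c • L) (hΓN : bf Γ N = 1)
    (A : V) (x y : ℚ) (hA : A = x • N + y • L)
    (hΓA : bf Γ A = 1) (hAd : bf A (L - A) = d) :
    x = 1 ∧ (y = 0 ∨ y = 1 - c) := by
  have hln : bf L N = bf N L := hsymm L N
  have hlne : bf L L ≠ 0 := ne_of_gt hL
  subst hΓ hA hd
  simp only [map_add, map_sub, map_smul, LinearMap.add_apply, LinearMap.sub_apply,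
    LinearMap.smul_apply, smul_eq_mul, hln] at hΓN hΓA hAd ⊢
  have hc' : c * bf L L = 2 * (bf N (L - N) + bf N N) := by
    rw [hc]; field_simp
  simp only [map_sub, map_add] at hc'
  have hx : x = 1 := by linear_combination hΓA - x * hΓN - y * hc'
  refine ⟨hx, ?_⟩
  subst hx
  have key : y * (bf L L * (1 - c) - y * bf L L) = 0 := by linear_combination hAd - y * hc'
  rcases mul_eq_zero.mp key with h | h
  · exact Or.inl h
  · right
    have : y * bf L L = (1 - c) * bf L L := by linarith
    exact mul_right_cancel₀ hlne this
end

section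
/- Suppose the form on Λ satisfies the Hodge index property. Let D, Γ ∈ Λ with D² = n ≥ 2, Γ² = −2, Γ.D = 1, and set L := 2D + Γ. Let N ∈ Λ satisfy N² = n, (L−N)² ≥ N², 0 < N.(L−N) ≤ n + 1, Γ.N ≥ 0, and assume N and L−N are linearly independent over ℚ. Then N.(L−N) = n + 1, N.L = 2n + 1, and N = D. -/
private lemma stmt8_aux (d g n : ℤ) (hn : 2 ≤ n) (hd : d ≤ -n)
    (hdg : 2 * d + g = 2 * n + 1)
    (h : n * (n * g ^ 2 - 2 * g * d - 2 * d ^ 2) ≤ 0 ^ 2) : False := by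
  have h4 : 0 < g ^ 2 - 4 * d ^ 2 := by
    nlinarith [mul_pos (show (0:ℤ) < g - 2 * d by linarith)
      (show (0:ℤ) < g + 2 * d by linarith)]
  have h5 : 0 ≤ -(2 * g * d) := by
    nlinarith [mul_nonneg (show (0:ℤ) ≤ g by linarith) (show (0:ℤ) ≤ -2 * d by linarith)]
  have h6 : 0 < n * g ^ 2 - 2 * g * d - 2 * d ^ 2 := by
    nlinarith [h4, h5, sq_nonneg g, sq_nonneg d,
      mul_nonneg (show (0:ℤ) ≤ n - 2 by linarith) (sq_nonneg g)]
  nlinarith [mul_pos (show (0:ℤ) < n by linarith) h6]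

/-- The case N² = k − 1 in the proof of Proposition 4.1: under the Hodge
index property, with `D² = n ≥ 2`, `Γ² = −2`, `Γ.D = 1`, `L := 2D + Γ`, if
`N² = n`, `(L−N)² ≥ N²`, `0 < N.(L−N) ≤ n + 1`, `Γ.N ≥ 0` and `N, L−N` are
linearly independent, then `N.(L−N) = n + 1`, `N.L = 2n + 1` and `N = D`. -/
theorem stmt_8 (Λ : Type*) [AddCommGroup Λ] [Module ℤ Λ] [Module.Free ℤ Λ]
    (b : Λ →ₗ[ℤ] Λ →ₗ[ℤ] ℤ) (hsymm : ∀ x y : Λ, b x y = b y x)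
    (hodge : ∀ x y : Λ, 0 < b x x →
      b x x * b y y ≤ (b x y) ^ 2 ∧
        (b x x * b y y = (b x y) ^ 2 → ¬ LinearIndependent ℤ ![x, y]))
    (D Γ : Λ) (n : ℤ) (hn : 2 ≤ n)
    (hDD : b D D = n) (hΓΓ : b Γ Γ = -2) (hΓD : b Γ D = 1)
    (L : Λ) (hL : L = (2 : ℤ) • D + Γ)
    (N : Λ) (hNN : b N N = n) (hLN : b N N ≤ b (L - N) (L - N))
    (hpos : 0 < b N (L - N)) (hle : b N (L - N) ≤ n + 1)
    (hΓN : 0 ≤ b Γ N) (hind : LinearIndependent ℤ ![N, L - N]) :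
    b N (L - N) = n + 1 ∧ b N L = 2 * n + 1 ∧ N = D := by
  -- bilinearity helpers (bridging the ℤ-smul instance diamond)
  have bl : ∀ (a : ℤ) (u v : Λ), b (a • u) v = a * b u v := by
    intro a u v
    rw [← int_smul_eq_zsmul ‹Module ℤ Λ› a u]
    exact LinearMap.congr_fun (b.map_smul a u) v
  have br : ∀ (a : ℤ) (u v : Λ), b u (a • v) = a * b u v := by
    intro a u v
    rw [← int_smul_eq_zsmul ‹Module ℤ Λ› a v]
    exact (b u).map_smul a v
  have hNpos : 0 < b N N := by rw [hNN]; omega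
  -- Step 1: b N (L - N) = n + 1
  have h1 := hodge N (L - N) hNpos
  have hm2 : b N N * b (L - N) (L - N) < (b N (L - N)) ^ 2 :=
    lt_of_le_of_ne h1.1 (fun h => absurd hind (h1.2 h))
  have hm : b N (L - N) = n + 1 := by
    rw [hNN] at hm2 hLN
    nlinarith [hpos, hle, hm2, hLN]
  -- Step 2: b N L = 2n + 1
  have hsub : b N (L - N) = b N L - b N N := map_sub (b N) L N
  have hNL : b N L = 2 * n + 1 := by rw [hsub, hNN] at hm; omega
  -- abbreviations
  have hNΓ : b N Γ = b Γ N := hsymm N Γ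
  have hdg : 2 * (b N D) + b Γ N = 2 * n + 1 := by
    rw [hL, map_add, br, hNΓ] at hNL
    omega
  -- Step 3: b N D ≥ n
  have h2 := hodge N D hNpos
  have hd2 : n * n ≤ (b N D) ^ 2 := by rw [hNN, hDD] at h2; exact h2.1
  have hdn : n ≤ b N D := by
    by_contra hcon
    push_neg at hcon
    have hdneg : b N D ≤ -n := by nlinarith
    have hDΓ : b D Γ = 1 := (hsymm D Γ).trans hΓD
    have hNy : b N ((b Γ N) • D - (b N D) • Γ) = 0 := by
      rw [map_sub, br, br, hNΓ]; ring
    have hyy : b ((b Γ N) • D - (b N D) • Γ) ((b Γ N) • D - (b N D) • Γ)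
        = n * (b Γ N) ^ 2 - 2 * (b Γ N) * (b N D) - 2 * (b N D) ^ 2 := by
      rw [map_sub, br, br, map_sub, LinearMap.sub_apply, LinearMap.sub_apply,
        bl, bl, bl, bl, hDD, hΓΓ, hDΓ, hΓD]
      ring
    have h3 := (hodge N ((b Γ N) • D - (b N D) • Γ) hNpos).1
    rw [hNN, hNy, hyy] at h3
    exact stmt8_aux (b N D) (b Γ N) n hn hdneg hdg h3
  have hdn' : b N D = n := by omega
  -- Step 4: equality in Hodge for N and D forces N = D
  have heq : b N N * b D D = (b N D) ^ 2 := by rw [hNN, hDD, hdn']; ring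
  have hnind := h2.2 heq
  rw [Fintype.not_linearIndependent_iff] at hnind
  obtain ⟨c, hsum, i, hi⟩ := hnind
  rw [Fin.sum_univ_two] at hsum
  simp only [Matrix.cons_val_zero, Matrix.cons_val_one, Matrix.head_cons] at hsum
  have happ : c 0 * n + c 1 * n = 0 := by
    have h7 := congrArg (b N) hsum
    rw [map_add, map_zero] at h7
    rw [(b N).map_smul (c 0) N, (b N).map_smul (c 1) D] at h7
    rw [show ((c 0) • b N N : ℤ) = c 0 * b N N from rfl,
      show ((c 1) • b N D : ℤ) = c 1 * b N D from rfl, hNN, hdn'] at h7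
    linarith
  have hc01 : c 1 = -(c 0) := by
    have hn0 : n ≠ 0 := by omega
    have h8 : (c 0 + c 1) * n = 0 := by linarith [happ]
    rcases mul_eq_zero.1 h8 with h | h
    · omega
    · exact absurd h hn0
  have hc0 : c 0 ≠ 0 := by
    intro h0
    have hc1 : c 1 = 0 := by omega
    have hior : (i : ℕ) = 0 ∨ (i : ℕ) = 1 := by omega
    rcases hior with h | h
    · rw [show i = 0 from Fin.ext h] at hi; exact hi h0
    · rw [show i = 1 from Fin.ext h] at hi; exact hi hc1
  rw [hc01, neg_smul, ← sub_eq_add_neg, sub_eq_zero] at hsum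
  exact ⟨hm, hNL, smul_right_injective Λ hc0 hsum⟩
end
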